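/- The splittance of a graph G equals the minimum number of edge insertions and deletions needed to turn G into a split graph. -/

import Mathlib

open SimpleGraph Finset

def splittancePart {V : Type*} [Fintype V] [DecidableEq V] (G : SimpleGraph V)
    [DecidableRel G.Adj] (A : Finset V) : ℕ :=
  ((A.offDiag.filter fun p => ¬ G.Adj p.1 p.2).card
    + (Aᶜ.offDiag.filter fun p => G.Adj p.1 p.2).card) / 2

noncomputable def splittance {V : Type*} [Fintype V] [DecidableEq V] (G : SimpleGraph V)
    [DecidableRel G.Adj] : ℕ :=
  sInf { m : ℕ | ∃ A : Finset V, splittancePart G A = m }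

def IsIndep {V : Type*} (G : SimpleGraph V) (A : Set V) : Prop :=
  ∀ u ∈ A, ∀ v ∈ A, u ≠ v → ¬ G.Adj u v

def IsSplit {V : Type*} (G : SimpleGraph V) : Prop :=
  ∃ A : Set V, G.IsClique A ∧ IsIndep G Aᶜ

section Aux

variable {V : Type*} [Fintype V] [DecidableEq V] (G : SimpleGraph V) [DecidableRel G.Adj]
  (A : Finset V)

/-- The difference graph: edges that must be edited for partition `A`. -/
def diffGraph : SimpleGraph V where
  Adj u v := u ≠ v ∧ ((u ∈ A ∧ v ∈ A ∧ ¬ G.Adj u v) ∨ (u ∉ A ∧ v ∉ A ∧ G.Adj u v))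
  symm := by
    refine ⟨?_⟩; rintro u v ⟨h, h1 | h2⟩
    · exact ⟨h.symm, Or.inl ⟨h1.2.1, h1.1, fun hh => h1.2.2 hh.symm⟩⟩
    · exact ⟨h.symm, Or.inr ⟨h2.2.1, h2.1, h2.2.2.symm⟩⟩
  loopless := by refine ⟨?_⟩; rintro u ⟨h, _⟩; exact h rfl

instance : DecidableRel (diffGraph G A).Adj := fun u v => by
  unfold diffGraph; exact inferInstanceAs (Decidable (_ ∧ _))

lemma splittancePart_eq_card : splittancePart G A = (diffGraph G A).edgeFinset.card := by
  have key : (univ.filter fun (x, y) => (diffGraph G A).Adj x y)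
      = (A.offDiag.filter fun p => ¬ G.Adj p.1 p.2)
        ∪ (Aᶜ.offDiag.filter fun p => G.Adj p.1 p.2) := by
    ext ⟨u, v⟩
    simp only [mem_filter, mem_union, mem_offDiag, mem_univ, true_and, mem_compl,
      mem_univ]; simp only [diffGraph]
    constructor
    · rintro ⟨h, h1 | h2⟩
      · exact Or.inl ⟨⟨h1.1, h1.2.1, h⟩, h1.2.2⟩
      · exact Or.inr ⟨⟨h2.1, h2.2.1, h⟩, h2.2.2⟩
    · rintro (⟨⟨hu, hv, h⟩, hn⟩ | ⟨⟨hu, hv, h⟩, ha⟩)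
      · exact ⟨h, Or.inl ⟨hu, hv, hn⟩⟩
      · exact ⟨h, Or.inr ⟨hu, hv, ha⟩⟩
  have hdisj : Disjoint (A.offDiag.filter fun p => ¬ G.Adj p.1 p.2)
      (Aᶜ.offDiag.filter fun p => G.Adj p.1 p.2) := by
    rw [Finset.disjoint_left]
    rintro ⟨u, v⟩ h1 h2
    simp only [mem_filter, mem_offDiag, mem_compl] at h1 h2
    exact h2.1.1 h1.1.1
  have := (diffGraph G A).two_mul_card_edgeFinset
  rw [key, Finset.card_union_of_disjoint hdisj] at this
  unfold splittancePart
  omega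

/-- The edited split graph. -/
def splitGraph : SimpleGraph V where
  Adj u v := u ≠ v ∧ ((u ∈ A ∧ v ∈ A) ∨ (G.Adj u v ∧ (u ∈ A ∨ v ∈ A)))
  symm := by
    refine ⟨?_⟩; rintro u v ⟨h, h1 | h2⟩
    · exact ⟨h.symm, Or.inl h1.symm⟩
    · exact ⟨h.symm, Or.inr ⟨h2.1.symm, h2.2.symm⟩⟩
  loopless := by refine ⟨?_⟩; rintro u ⟨h, _⟩; exact h rfl

lemma splitGraph_isSplit : IsSplit (splitGraph G A) := by
  refine ⟨↑A, ?_, ?_⟩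
  · intro u hu v hv huv
    exact ⟨huv, Or.inl ⟨hu, hv⟩⟩
  · intro u hu v hv huv hadj
    simp only [Set.mem_compl_iff, Finset.mem_coe] at hu hv
    rcases hadj.2 with h | h
    · exact hu h.1
    · rcases h.2 with h | h
      · exact hu h
      · exact hv h

lemma symmDiff_splitGraph :
    symmDiff G.edgeSet (splitGraph G A).edgeSet = (diffGraph G A).edgeSet := by
  ext e
  induction e with
  | h u v =>
    simp only [Set.mem_symmDiff, mem_edgeSet, diffGraph, splitGraph]
    constructor
    · rintro (⟨ha, hn⟩ | ⟨⟨hne, h⟩, hn⟩)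
      · refine ⟨ha.ne, ?_⟩
        by_cases hu : u ∈ A <;> by_cases hv : v ∈ A
        · exact absurd ⟨ha.ne, Or.inl ⟨hu, hv⟩⟩ hn
        · exact absurd ⟨ha.ne, Or.inr ⟨ha, Or.inl hu⟩⟩ hn
        · exact absurd ⟨ha.ne, Or.inr ⟨ha, Or.inr hv⟩⟩ hn
        · exact Or.inr ⟨hu, hv, ha⟩
      · refine ⟨hne, ?_⟩
        rcases h with ⟨hu, hv⟩ | ⟨ha, _⟩
        · exact Or.inl ⟨hu, hv, hn⟩
        · exact absurd ha hn
    · rintro ⟨hne, ⟨hu, hv, hn⟩ | ⟨hu, hv, ha⟩⟩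
      · exact Or.inr ⟨⟨hne, Or.inl ⟨hu, hv⟩⟩, hn⟩
      · refine Or.inl ⟨ha, ?_⟩
        rintro ⟨_, ⟨h1, _⟩ | ⟨_, h | h⟩⟩
        · exact hu h1
        · exact hu h
        · exact hv h

end Aux

theorem splittance_eq_min_edits {V : Type*} [Fintype V] [DecidableEq V]
    (G : SimpleGraph V) [DecidableRel G.Adj] :
    splittance G =
      sInf { r : ℕ | ∃ G' : SimpleGraph V, IsSplit G' ∧
        (symmDiff G.edgeSet G'.edgeSet).ncard = r } := by
  classical
  apply le_antisymm
  · -- splittance ≤ min edits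
    have hne : { r : ℕ | ∃ G' : SimpleGraph V, IsSplit G' ∧
        (symmDiff G.edgeSet G'.edgeSet).ncard = r }.Nonempty := by
      exact ⟨_, splitGraph G ∅, splitGraph_isSplit G ∅, rfl⟩
    obtain ⟨G', hG', hcard⟩ := Nat.sInf_mem hne
    obtain ⟨S, hclique, hindep⟩ := hG'
    set A : Finset V := S.toFinset with hA
    have hsub : (diffGraph G A).edgeSet ⊆ symmDiff G.edgeSet G'.edgeSet := by
      intro e
      induction e with
      | h u v =>
        rintro ⟨hne', ⟨hu, hv, hn⟩ | ⟨hu, hv, ha⟩⟩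
        · rw [Set.mem_symmDiff]
          refine Or.inr ⟨?_, hn⟩
          exact hclique (by simpa [hA] using hu) (by simpa [hA] using hv) hne'
        · rw [Set.mem_symmDiff]
          refine Or.inl ⟨ha, ?_⟩
          exact hindep _ (by simpa [hA] using hu) _ (by simpa [hA] using hv) hne'
    have hle : splittancePart G A ≤ (symmDiff G.edgeSet G'.edgeSet).ncard := by
      rw [splittancePart_eq_card]
      have : (diffGraph G A).edgeSet.ncard ≤ (symmDiff G.edgeSet G'.edgeSet).ncard :=
        Set.ncard_le_ncard hsub (Set.toFinite _)
      rwa [← Set.ncard_coe_finset, SimpleGraph.coe_edgeFinset]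
    calc splittance G ≤ splittancePart G A := Nat.sInf_le ⟨A, rfl⟩
      _ ≤ _ := hle.trans_eq hcard
  · -- min edits ≤ splittance
    have hne : { m : ℕ | ∃ A : Finset V, splittancePart G A = m }.Nonempty :=
      ⟨_, ∅, rfl⟩
    obtain ⟨A, hA⟩ := Nat.sInf_mem hne
    refine le_trans (Nat.sInf_le ?_) (le_of_eq hA)
    refine ⟨splitGraph G A, splitGraph_isSplit G A, ?_⟩
    rw [symmDiff_splitGraph, ← SimpleGraph.coe_edgeFinset, Set.ncard_coe_finset,
      ← splittancePart_eq_card]
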